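/- The critical exponent for 3×3 GDN matrices equals 2: (a) there exists a 3×3 GDN matrix A and α ∈ (1,2) with A^α having a negative entry; (b) for every 3×3 GDN matrix A and every real α > 2, A^α is entrywise nonnegative. -/

import Mathlib

open Matrix

/-- The continuous power `A^α := S * D^α * S⁻¹` of a diagonalizable matrix
`A = S * diagonal d * S⁻¹`. -/
noncomputable def contPow {n : ℕ} (S : Matrix (Fin n) (Fin n) ℝ) (d : Fin n → ℝ) (α : ℝ) :
    Matrix (Fin n) (Fin n) ℝ :=
  S * Matrix.diagonal (fun i => d i ^ α) * S⁻¹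

open Real Set

/-- Two-term exponential polynomial with distinct rates vanishing at two points is zero. -/
lemma exp2_eq_zero {p q c1 c2 t1 t2 : ℝ} (hpq : p < q) (h12 : t1 < t2)
    (e1 : c1 * exp (p * t1) + c2 * exp (q * t1) = 0)
    (e2 : c1 * exp (p * t2) + c2 * exp (q * t2) = 0) : c1 = 0 ∧ c2 = 0 := by
  have key : ∀ t : ℝ, exp (q * t) = exp ((q - p) * t) * exp (p * t) := by
    intro t; rw [← Real.exp_add]; ring_nf
  rw [key] at e1 e2
  have f1 : (c1 + c2 * exp ((q - p) * t1)) * exp (p * t1) = 0 := by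
    rw [add_mul, mul_assoc]; exact e1
  have f2 : (c1 + c2 * exp ((q - p) * t2)) * exp (p * t2) = 0 := by
    rw [add_mul, mul_assoc]; exact e2
  have g1 : c1 + c2 * exp ((q - p) * t1) = 0 :=
    (mul_eq_zero.1 f1).resolve_right (Real.exp_ne_zero _)
  have g2 : c1 + c2 * exp ((q - p) * t2) = 0 :=
    (mul_eq_zero.1 f2).resolve_right (Real.exp_ne_zero _)
  have hE : exp ((q - p) * t1) < exp ((q - p) * t2) := by
    apply Real.exp_lt_exp.2
    have : 0 < q - p := by linarith
    nlinarith
  have hc2 : c2 = 0 := by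
    by_contra hc
    have h := mul_left_cancel₀ hc (by linarith : c2 * exp ((q-p)*t1) = c2 * exp ((q-p)*t2))
    exact absurd h (ne_of_lt hE)
  exact ⟨by simpa [hc2] using g1, hc2⟩

/-- Three-term exponential polynomial with distinct rates vanishing at three points is zero. -/
lemma exp3_eq_zero {p q r c1 c2 c3 t1 t2 t3 : ℝ} (hpq : p < q) (hqr : q < r)
    (h12 : t1 < t2) (h23 : t2 < t3)
    (e1 : c1 * exp (p * t1) + c2 * exp (q * t1) + c3 * exp (r * t1) = 0)
    (e2 : c1 * exp (p * t2) + c2 * exp (q * t2) + c3 * exp (r * t2) = 0)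
    (e3 : c1 * exp (p * t3) + c2 * exp (q * t3) + c3 * exp (r * t3) = 0) :
    c1 = 0 ∧ c2 = 0 ∧ c3 = 0 := by
  -- divide by exp (p t) : h t = c1 + c2 exp((q-p)t) + c3 exp((r-p)t)
  set Q := q - p with hQ
  set R := r - p with hR
  have hQ0 : 0 < Q := by simp [hQ]; linarith
  have hQR : Q < R := by simp [hQ, hR]; linarith
  have key : ∀ s t : ℝ, exp (s * t) = exp ((s - p) * t) * exp (p * t) := by
    intro s t; rw [← Real.exp_add]; ring_nf
  have conv : ∀ t : ℝ, c1 * exp (p*t) + c2 * exp (q*t) + c3 * exp (r*t)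
      = (c1 + c2 * exp (Q*t) + c3 * exp (R*t)) * exp (p*t) := by
    intro t; rw [key q t, key r t]; ring
  have z : ∀ t : ℝ, c1 * exp (p*t) + c2 * exp (q*t) + c3 * exp (r*t) = 0 →
      c1 + c2 * exp (Q*t) + c3 * exp (R*t) = 0 := by
    intro t ht
    rw [conv t] at ht
    exact (mul_eq_zero.1 ht).resolve_right (Real.exp_ne_zero _)
  have z1 := z t1 e1
  have z2 := z t2 e2
  have z3 := z t3 e3
  -- Rolle on h
  have hderiv : ∀ t : ℝ, HasDerivAt (fun t => c1 + c2 * exp (Q*t) + c3 * exp (R*t))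
      (c2 * Q * exp (Q*t) + c3 * R * exp (R*t)) t := by
    intro t
    have h2 : HasDerivAt (fun t : ℝ => c2 * exp (Q*t)) (c2 * (exp (Q*t) * Q)) t := by
      exact (((hasDerivAt_id t).const_mul Q).exp.const_mul c2).congr_deriv (by simp only [id_eq]; ring)
    have h3 : HasDerivAt (fun t : ℝ => c3 * exp (R*t)) (c3 * (exp (R*t) * R)) t := by
      exact (((hasDerivAt_id t).const_mul R).exp.const_mul c3).congr_deriv (by simp only [id_eq]; ring)
    have := ((hasDerivAt_const t c1).add h2).add h3
    exact this.congr_deriv (by ring)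
  have cont : ∀ (a b : ℝ), ContinuousOn (fun t => c1 + c2 * exp (Q*t) + c3 * exp (R*t)) (Icc a b) := by
    intro a b
    apply Continuous.continuousOn
    fun_prop
  obtain ⟨s1, hs1m, hs1⟩ := exists_hasDerivAt_eq_zero h12 (cont t1 t2) (by rw [z1, z2])
    (fun x _ => hderiv x)
  obtain ⟨s2, hs2m, hs2⟩ := exists_hasDerivAt_eq_zero h23 (cont t2 t3) (by rw [z2, z3])
    (fun x _ => hderiv x)
  have hs12 : s1 < s2 := lt_trans hs1m.2 hs2m.1
  have h2' : (c2 * Q) * exp (Q * s1) + (c3 * R) * exp (R * s1) = 0 := by linarith [hs1]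
  have h2'' : (c2 * Q) * exp (Q * s2) + (c3 * R) * exp (R * s2) = 0 := by linarith [hs2]
  obtain ⟨hc2Q, hc3R⟩ := exp2_eq_zero hQR hs12 h2' h2''
  have hc2 : c2 = 0 := by
    rcases mul_eq_zero.1 hc2Q with h | h
    · exact h
    · exact absurd h (ne_of_gt hQ0)
  have hc3 : c3 = 0 := by
    rcases mul_eq_zero.1 hc3R with h | h
    · exact h
    · exact absurd h (ne_of_gt (lt_trans hQ0 hQR))
  refine ⟨?_, hc2, hc3⟩
  have := z1
  simp [hc2, hc3] at this
  exact this

/-- If a continuous function is nonnegative at integers `≥ 1` and any two zeros past `1`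
force it to vanish identically, then it is nonnegative for all `β > 1`. -/
lemma master2 (g : ℝ → ℝ) (hc : Continuous g) (hn : ∀ n : ℕ, 1 ≤ n → 0 ≤ g n)
    (H : ∀ t1 t2 : ℝ, t1 < t2 → g t1 = 0 → g t2 = 0 → ∀ t, g t = 0)
    {β : ℝ} (hβ : 1 < β) : 0 ≤ g β := by
  by_contra hneg
  push_neg at hneg
  set N : ℕ := ⌈β⌉₊ + 1 with hN
  have hβN : β < (N : ℝ) := by
    have := Nat.le_ceil β
    have : (⌈β⌉₊ : ℝ) < (N : ℝ) := by exact_mod_cast Nat.lt_succ_self _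
    linarith [Nat.le_ceil β]
  have hgN : 0 ≤ g N := hn N (by omega)
  obtain ⟨z2, hz2m, hz2⟩ : ∃ z ∈ Set.Icc β (N : ℝ), g z = 0 :=
    intermediate_value_Icc (le_of_lt hβN) hc.continuousOn ⟨le_of_lt hneg, hgN⟩
  have hz2β : β < z2 := lt_of_le_of_ne hz2m.1 (fun h => by rw [← h] at hz2; linarith)
  have hg1 : 0 ≤ g 1 := by simpa using hn 1 le_rfl
  rcases eq_or_lt_of_le hg1 with h1 | h1
  · have := H 1 z2 (by linarith) h1.symm hz2 β
    linarith
  · obtain ⟨z1, hz1m, hz1⟩ : ∃ z ∈ Set.Icc (1:ℝ) β, g z = 0 :=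
      intermediate_value_Icc' (le_of_lt hβ) hc.continuousOn ⟨le_of_lt hneg, le_of_lt h1⟩
    have hz1β : z1 < β := lt_of_le_of_ne hz1m.2 (fun h => by rw [h] at hz1; linarith)
    have := H z1 z2 (by linarith) hz1 hz2 β
    linarith

/-- Variant anchored at `0`: three zeros kill the function. -/
lemma master3 (g : ℝ → ℝ) (hc : Continuous g) (h0 : g 0 = 0) (hn : ∀ n : ℕ, 0 ≤ g n)
    (H : ∀ t1 t2 t3 : ℝ, t1 < t2 → t2 < t3 → g t1 = 0 → g t2 = 0 → g t3 = 0 → ∀ t, g t = 0)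
    {β : ℝ} (hβ : 1 < β) : 0 ≤ g β := by
  by_contra hneg
  push_neg at hneg
  set N : ℕ := ⌈β⌉₊ + 1 with hN
  have hβN : β < (N : ℝ) := by
    have : (⌈β⌉₊ : ℝ) < (N : ℝ) := by exact_mod_cast Nat.lt_succ_self _
    linarith [Nat.le_ceil β]
  have hgN : 0 ≤ g N := hn N
  obtain ⟨z2, hz2m, hz2⟩ : ∃ z ∈ Set.Icc β (N : ℝ), g z = 0 :=
    intermediate_value_Icc (le_of_lt hβN) hc.continuousOn ⟨le_of_lt hneg, hgN⟩
  have hz2β : β < z2 := lt_of_le_of_ne hz2m.1 (fun h => by rw [← h] at hz2; linarith)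
  have hg1 : 0 ≤ g 1 := by simpa using hn 1
  rcases eq_or_lt_of_le hg1 with h1 | h1
  · have := H 0 1 z2 one_pos (by linarith) h0 h1.symm hz2 β
    linarith
  · obtain ⟨z1, hz1m, hz1⟩ : ∃ z ∈ Set.Icc (1:ℝ) β, g z = 0 :=
      intermediate_value_Icc' (le_of_lt hβ) hc.continuousOn ⟨le_of_lt hneg, le_of_lt h1⟩
    have hz1β : z1 < β := lt_of_le_of_ne hz1m.2 (fun h => by rw [h] at hz1; linarith)
    have := H 0 z1 z2 (by linarith [hz1m.1]) (by linarith) h0 hz1 hz2 β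
    linarith

/-- Two distinct positive bases: nonnegativity at integers `≥ 1` gives nonnegativity
for all exponents `β > 1`. -/
lemma two_base {cu cv u v : ℝ} (hu : 0 < u) (huv : u < v)
    (hn : ∀ n : ℕ, 1 ≤ n → 0 ≤ cu * u ^ (n : ℝ) + cv * v ^ (n : ℝ))
    {β : ℝ} (hβ : 1 < β) : 0 ≤ cu * u ^ β + cv * v ^ β := by
  have hv : 0 < v := lt_trans hu huv
  have hpq : Real.log u < Real.log v := Real.log_lt_log hu huv
  set g : ℝ → ℝ := fun t => cu * Real.exp (Real.log u * t) + cv * Real.exp (Real.log v * t)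
    with hg
  have hrw : ∀ t : ℝ, cu * u ^ t + cv * v ^ t = g t := by
    intro t
    rw [hg]
    simp only [Real.rpow_def_of_pos hu, Real.rpow_def_of_pos hv]
  have key : 0 ≤ g β := by
    apply master2 g (by fun_prop) (fun n hn1 => by rw [← hrw]; exact hn n hn1) ?_ hβ
    intro t1 t2 h12 hz1 hz2 t
    obtain ⟨h1, h2⟩ := exp2_eq_zero hpq h12 hz1 hz2
    simp [hg, h1, h2]
  rw [hrw]; exact key

/-- Three distinct positive bases with coefficients summing to zero. -/
lemma three_base {cu cv cw u v w : ℝ} (hu : 0 < u) (huv : u < v) (hvw : v < w)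
    (h0 : cu + cv + cw = 0)
    (hn : ∀ n : ℕ, 0 ≤ cu * u ^ (n : ℝ) + cv * v ^ (n : ℝ) + cw * w ^ (n : ℝ))
    {β : ℝ} (hβ : 1 < β) : 0 ≤ cu * u ^ β + cv * v ^ β + cw * w ^ β := by
  have hv : 0 < v := lt_trans hu huv
  have hw : 0 < w := lt_trans hv hvw
  have hpq : Real.log u < Real.log v := Real.log_lt_log hu huv
  have hqr : Real.log v < Real.log w := Real.log_lt_log hv hvw
  set g : ℝ → ℝ := fun t => cu * Real.exp (Real.log u * t) + cv * Real.exp (Real.log v * t)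
    + cw * Real.exp (Real.log w * t) with hg
  have hrw : ∀ t : ℝ, cu * u ^ t + cv * v ^ t + cw * w ^ t = g t := by
    intro t
    rw [hg]
    simp only [Real.rpow_def_of_pos hu, Real.rpow_def_of_pos hv, Real.rpow_def_of_pos hw]
  have key : 0 ≤ g β := by
    apply master3 g (by fun_prop) (by simp [hg]; linarith) (fun n => by rw [← hrw]; exact hn n)
      ?_ hβ
    intro t1 t2 t3 h12 h23 hz1 hz2 hz3 t
    obtain ⟨h1, h2, h3⟩ := exp3_eq_zero hpq hqr h12 h23 hz1 hz2 hz3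
    simp [hg, h1, h2, h3]
  rw [hrw]; exact key

/-- Sorted core lemma: a 3-term "power function" nonnegative at all naturals, with
coefficients summing to zero, is nonnegative at every exponent `β > 1`. -/
lemma core_sorted {c0 c1 c2 x0 x1 x2 : ℝ} (hx0 : 0 ≤ x0) (h01 : x0 ≤ x1) (h12 : x1 ≤ x2)
    (hanchor : c0 + c1 + c2 = 0)
    (hn : ∀ n : ℕ, 0 ≤ c0 * x0 ^ (n : ℝ) + c1 * x1 ^ (n : ℝ) + c2 * x2 ^ (n : ℝ))
    {β : ℝ} (hβ : 1 < β) : 0 ≤ c0 * x0 ^ β + c1 * x1 ^ β + c2 * x2 ^ β := by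
  have hβ0 : (β : ℝ) ≠ 0 := by linarith
  have hx1 : 0 ≤ x1 := le_trans hx0 h01
  have hx2 : 0 ≤ x2 := le_trans hx1 h12
  have hone : ((1:ℕ):ℝ) = (1:ℝ) := by norm_num
  rcases eq_or_lt_of_le hx2 with h2z | h2p
  · -- x2 = 0, hence all zero
    have e0 : x0 = 0 := by linarith
    have e1 : x1 = 0 := by linarith
    rw [e0, e1, ← h2z, Real.zero_rpow hβ0]
    simp
  rcases eq_or_lt_of_le hx1 with h1z | h1p
  · -- x1 = 0 (so x0 = 0), single positive base x2
    have e0 : x0 = 0 := by linarith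
    have hc2 : 0 ≤ c2 := by
      have h := hn 1
      rw [e0, ← h1z, hone, Real.zero_rpow one_ne_zero, Real.rpow_one] at h
      simp at h
      nlinarith [h]
    rw [e0, ← h1z, Real.zero_rpow hβ0]
    simp
    positivity
  rcases eq_or_lt_of_le hx0 with h0z | h0p
  · -- x0 = 0, two positive bases x1 ≤ x2
    rw [← h0z, Real.zero_rpow hβ0]
    rcases eq_or_lt_of_le h12 with he | hlt
    · -- x1 = x2
      have hc : 0 ≤ c1 + c2 := by
        have h := hn 1
        rw [← h0z, ← he, hone, Real.zero_rpow one_ne_zero, Real.rpow_one] at h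
        simp at h
        nlinarith [h]
      rw [← he]
      have heq : c1 * x1 ^ β + c2 * x1 ^ β = (c1 + c2) * x1 ^ β := by ring
      rw [mul_zero, zero_add, heq]
      positivity
    · have key := two_base (cu := c1) (cv := c2) h1p hlt (fun n hn1 => by
        have h := hn n
        rw [← h0z, Real.zero_rpow
          (by exact_mod_cast Nat.one_le_iff_ne_zero.1 hn1 : ((n:ℝ) ≠ 0))] at h
        linarith) hβ
      linarith
  -- all positive
  rcases eq_or_lt_of_le h01 with he01 | hlt01
  · rcases eq_or_lt_of_le h12 with he12 | hlt12
    · -- all equal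
      rw [show x1 = x0 from he01.symm, show x2 = x0 from (he01.trans he12).symm]
      have heq : c0 * x0 ^ β + c1 * x0 ^ β + c2 * x0 ^ β = (c0 + c1 + c2) * x0 ^ β := by ring
      rw [heq, hanchor, zero_mul]
    · -- x0 = x1 < x2
      have key := two_base (cu := c0 + c1) (cv := c2) h0p (he01 ▸ hlt12) (fun n hn1 => by
        have h := hn n
        rw [← he01] at h
        have heq : (c0 + c1) * x0 ^ (n:ℝ) + c2 * x2 ^ (n:ℝ)
            = c0 * x0 ^ (n:ℝ) + c1 * x0 ^ (n:ℝ) + c2 * x2 ^ (n:ℝ) := by ring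
        rw [heq]; exact h) hβ
      rw [show x1 = x0 from he01.symm]
      have heq : c0 * x0 ^ β + c1 * x0 ^ β + c2 * x2 ^ β
          = (c0 + c1) * x0 ^ β + c2 * x2 ^ β := by ring
      rw [heq]; exact key
  · rcases eq_or_lt_of_le h12 with he12 | hlt12
    · -- x0 < x1 = x2
      have key := two_base (cu := c0) (cv := c1 + c2) h0p (show x0 < x1 from hlt01)
        (fun n hn1 => by
          have h := hn n
          rw [show x2 = x1 from he12.symm] at h
          have heq : c0 * x0 ^ (n:ℝ) + (c1 + c2) * x1 ^ (n:ℝ)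
              = c0 * x0 ^ (n:ℝ) + c1 * x1 ^ (n:ℝ) + c2 * x1 ^ (n:ℝ) := by ring
          rw [heq]; exact h) hβ
      rw [show x2 = x1 from he12.symm]
      have heq : c0 * x0 ^ β + c1 * x1 ^ β + c2 * x1 ^ β
          = c0 * x0 ^ β + (c1 + c2) * x1 ^ β := by ring
      rw [heq]; exact key
    · exact three_base h0p hlt01 hlt12 hanchor hn hβ

/-- Unsorted core lemma. -/
lemma core {c0 c1 c2 x0 x1 x2 : ℝ} (hx0 : 0 ≤ x0) (hx1 : 0 ≤ x1) (hx2 : 0 ≤ x2)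
    (hanchor : c0 + c1 + c2 = 0)
    (hn : ∀ n : ℕ, 0 ≤ c0 * x0 ^ (n : ℝ) + c1 * x1 ^ (n : ℝ) + c2 * x2 ^ (n : ℝ))
    {β : ℝ} (hβ : 1 < β) : 0 ≤ c0 * x0 ^ β + c1 * x1 ^ β + c2 * x2 ^ β := by
  rcases le_total x0 x1 with h01 | h10
  · rcases le_total x1 x2 with h12 | h21
    · exact core_sorted hx0 h01 h12 hanchor hn hβ
    · rcases le_total x0 x2 with h02 | h20
      · -- order x0 x2 x1
        have := core_sorted (c0 := c0) (c1 := c2) (c2 := c1) hx0 h02 h21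
          (by linarith) (fun n => by linarith [hn n]) hβ
        linarith
      · -- order x2 x0 x1
        have := core_sorted (c0 := c2) (c1 := c0) (c2 := c1) hx2 h20 h01
          (by linarith) (fun n => by linarith [hn n]) hβ
        linarith
  · rcases le_total x0 x2 with h02 | h20
    · -- order x1 x0 x2
      have := core_sorted (c0 := c1) (c1 := c0) (c2 := c2) hx1 h10 h02
        (by linarith) (fun n => by linarith [hn n]) hβ
      linarith
    · rcases le_total x1 x2 with h12 | h21
      · -- order x1 x2 x0
        have := core_sorted (c0 := c1) (c1 := c2) (c2 := c0) hx1 h12 h20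
          (by linarith) (fun n => by linarith [hn n]) hβ
        linarith
      · -- order x2 x1 x0
        have := core_sorted (c0 := c2) (c1 := c1) (c2 := c0) hx2 h21 h10
          (by linarith) (fun n => by linarith [hn n]) hβ
        linarith

open Matrix in
lemma entry_formula (S : Matrix (Fin 3) (Fin 3) ℝ) (v : Fin 3 → ℝ) (i j : Fin 3) :
    (S * Matrix.diagonal v * S⁻¹) i j
      = (S i 0 * S⁻¹ 0 j) * v 0 + (S i 1 * S⁻¹ 1 j) * v 1 + (S i 2 * S⁻¹ 2 j) * v 2 := by
  rw [Matrix.mul_apply, Fin.sum_univ_three]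
  simp [Matrix.mul_diagonal]
  ring

open Matrix in
lemma pow_eq_contPow (S : Matrix (Fin 3) (Fin 3) ℝ) (d : Fin 3 → ℝ)
    (hS : IsUnit S.det) (n : ℕ) :
    (S * Matrix.diagonal d * S⁻¹) ^ n = S * Matrix.diagonal (fun k => d k ^ n) * S⁻¹ := by
  induction n with
  | zero =>
    simp [Matrix.diagonal_one, Matrix.mul_nonsing_inv S hS]
  | succ n ih =>
    rw [pow_succ, ih]
    have : S * Matrix.diagonal (fun k => d k ^ n) * S⁻¹ * (S * Matrix.diagonal d * S⁻¹)
        = S * (Matrix.diagonal (fun k => d k ^ n) * (S⁻¹ * S) * Matrix.diagonal d) * S⁻¹ := by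
      simp only [Matrix.mul_assoc]
    rw [this, Matrix.nonsing_inv_mul S hS, Matrix.mul_one, Matrix.diagonal_mul_diagonal]
    have hfun : (fun k => d k ^ n * d k) = fun k => d k ^ (n+1) :=
      funext fun k => (pow_succ _ _).symm
    rw [hfun]

lemma pow_entry_nonneg {A : Matrix (Fin 3) (Fin 3) ℝ} (hA : ∀ i j, 0 ≤ A i j) :
    ∀ (n : ℕ) (i j : Fin 3), 0 ≤ (A ^ n) i j := by
  intro n
  induction n with
  | zero =>
    intro i j
    rw [pow_zero]
    by_cases h : i = j
    · simp [h, Matrix.one_apply]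
    · simp [Matrix.one_apply_ne h]
  | succ n ih =>
    intro i j
    rw [pow_succ, Matrix.mul_apply]
    exact Finset.sum_nonneg fun k _ => mul_nonneg (ih i k) (hA k j)

/-- Off-diagonal entries of `A^β` are nonnegative for every `β > 1`. -/
lemma offdiag_nonneg (S : Matrix (Fin 3) (Fin 3) ℝ) (d : Fin 3 → ℝ)
    (hA : ∀ i j, 0 ≤ (S * Matrix.diagonal d * S⁻¹) i j) (hd : ∀ k, 0 ≤ d k)
    (hS : IsUnit S.det) {i j : Fin 3} (hij : i ≠ j) {β : ℝ} (hβ : 1 < β) :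
    0 ≤ contPow S d β i j := by
  rw [contPow, entry_formula]
  apply core (hd 0) (hd 1) (hd 2) ?_ ?_ hβ
  · -- anchor : sum of coefficients is the (i,j) entry of S * S⁻¹ = 1
    have h1 : (S * S⁻¹) i j = 0 := by
      rw [Matrix.mul_nonsing_inv S hS, Matrix.one_apply_ne hij]
    rw [Matrix.mul_apply, Fin.sum_univ_three] at h1
    linarith [h1]
  · intro n
    have h := pow_entry_nonneg hA n i j
    rw [pow_eq_contPow S d hS n, entry_formula] at h
    simpa [Real.rpow_natCast] using h

/-- The semigroup property `A^(α/2) * A^(α/2) = A^α`. -/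
lemma contPow_half (S : Matrix (Fin 3) (Fin 3) ℝ) (d : Fin 3 → ℝ) (hd : ∀ k, 0 ≤ d k)
    (hS : IsUnit S.det) {α : ℝ} (hα : α ≠ 0) :
    contPow S d (α/2) * contPow S d (α/2) = contPow S d α := by
  unfold contPow
  have : S * Matrix.diagonal (fun k => d k ^ (α/2)) * S⁻¹
        * (S * Matrix.diagonal (fun k => d k ^ (α/2)) * S⁻¹)
      = S * (Matrix.diagonal (fun k => d k ^ (α/2)) * (S⁻¹ * S)
        * Matrix.diagonal (fun k => d k ^ (α/2))) * S⁻¹ := by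
    simp only [Matrix.mul_assoc]
  rw [this, Matrix.nonsing_inv_mul S hS, Matrix.mul_one, Matrix.diagonal_mul_diagonal]
  have hfun : (fun i => d i ^ (α/2) * d i ^ (α/2)) = fun i => d i ^ α := by
    funext k
    rw [← Real.rpow_add' (hd k) (by rw [show α/2 + α/2 = α by ring]; exact hα)]
    norm_num
  rw [hfun]

lemma rpow_three_half_16 : (16:ℝ) ^ (3/2:ℝ) = 64 := by
  have h16 : (16:ℝ) = 4 ^ (2:ℝ) := by
    rw [show (2:ℝ) = ((2:ℕ):ℝ) by norm_num, Real.rpow_natCast]; norm_num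
  rw [h16, ← Real.rpow_mul (by norm_num : (0:ℝ) ≤ 4)]
  rw [show (2:ℝ) * (3/2) = ((3:ℕ):ℝ) by norm_num, Real.rpow_natCast]; norm_num

lemma rpow_three_half_4 : (4:ℝ) ^ (3/2:ℝ) = 8 := by
  have h4 : (4:ℝ) = 2 ^ (2:ℝ) := by
    rw [show (2:ℝ) = ((2:ℕ):ℝ) by norm_num, Real.rpow_natCast]; norm_num
  rw [h4, ← Real.rpow_mul (by norm_num : (0:ℝ) ≤ 2)]
  rw [show (2:ℝ) * (3/2) = ((3:ℕ):ℝ) by norm_num, Real.rpow_natCast]; norm_num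

/-- The critical exponent for `3 × 3` GDN matrices equals `2`:
(a) some `3 × 3` GDN matrix has a continuous power `A^α`, `α ∈ (1,2)`, with a negative
entry; (b) every `3 × 3` GDN matrix has `A^α` entrywise nonnegative for every `α > 2`. -/
theorem GDN_critical_exponent_three :
    (∃ (A S : Matrix (Fin 3) (Fin 3) ℝ) (d : Fin 3 → ℝ) (α : ℝ) (i j : Fin 3),
      (∀ i j, 0 ≤ A i j) ∧ (∀ k, 0 ≤ d k) ∧ IsUnit S.det ∧
        A = S * Matrix.diagonal d * S⁻¹ ∧
        1 < α ∧ α < 2 ∧ contPow S d α i j < 0) ∧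
    (∀ (A S : Matrix (Fin 3) (Fin 3) ℝ) (d : Fin 3 → ℝ),
      (∀ i j, 0 ≤ A i j) → (∀ k, 0 ≤ d k) → IsUnit S.det →
        A = S * Matrix.diagonal d * S⁻¹ →
        ∀ α : ℝ, 2 < α → ∀ i j, 0 ≤ contPow S d α i j) := by
  constructor
  · -- Part (a): explicit counterexample
    refine ⟨!![205/13, 1, 0; 0, 64/13, 1; 88128/2197, 0, 4/13],
      !![169, 169, 169; 39, -1989, -2496; 432, 1836, 9792],
      ![16, 4, 1], 3/2, 2, 2, ?_, ?_, ?_, ?_, ?_, ?_, ?_⟩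
    case _ =>
      intro i j; fin_cases i <;> fin_cases j <;> norm_num
    case _ =>
      intro k; fin_cases k <;> norm_num
    case _ =>
      rw [Matrix.det_fin_three]
      norm_num [Matrix.cons_val_two, Matrix.vecHead, Matrix.vecTail]
    case _ =>
      have hT : (!![169, 169, 169; 39, -1989, -2496; 432, 1836, 9792] : Matrix (Fin 3) (Fin 3) ℝ)
          * !![816/142805, 17/32955, 1/30420; 16/28561, -4/6591, -1/6084;
              -51/142805, 1/10985, 1/7605] = 1 := by
        ext i j
        fin_cases i <;> fin_cases j <;>
          norm_num [Matrix.mul_apply, Fin.sum_univ_three, Matrix.one_apply, Fin.ext_iff, Matrix.cons_val_two, Matrix.vecHead, Matrix.vecTail]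
      rw [Matrix.inv_eq_right_inv hT]
      have hD : (Matrix.diagonal ![16, 4, 1] : Matrix (Fin 3) (Fin 3) ℝ)
          = !![16, 0, 0; 0, 4, 0; 0, 0, 1] := by
        ext i j
        fin_cases i <;> fin_cases j <;> simp [Matrix.diagonal, Matrix.vecHead, Matrix.vecTail, Fin.ext_iff]
      rw [hD]
      ext i j
      fin_cases i <;> fin_cases j <;>
        norm_num [Matrix.mul_apply, Fin.sum_univ_three, Matrix.cons_val_two, Matrix.vecHead, Matrix.vecTail]
    case _ => norm_num
    case _ => norm_num
    case _ =>
      have hT : (!![169, 169, 169; 39, -1989, -2496; 432, 1836, 9792] : Matrix (Fin 3) (Fin 3) ℝ)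
          * !![816/142805, 17/32955, 1/30420; 16/28561, -4/6591, -1/6084;
              -51/142805, 1/10985, 1/7605] = 1 := by
        ext i j
        fin_cases i <;> fin_cases j <;>
          norm_num [Matrix.mul_apply, Fin.sum_univ_three, Matrix.one_apply, Fin.ext_iff, Matrix.cons_val_two, Matrix.vecHead, Matrix.vecTail]
      rw [contPow, Matrix.inv_eq_right_inv hT]
      have hD : (Matrix.diagonal (fun i => (![16, 4, 1] : Fin 3 → ℝ) i ^ (3/2:ℝ))
            : Matrix (Fin 3) (Fin 3) ℝ)
          = !![64, 0, 0; 0, 8, 0; 0, 0, 1] := by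
        ext i j
        fin_cases i <;> fin_cases j <;>
          simp [Matrix.diagonal, Matrix.vecHead, Matrix.vecTail, Fin.ext_iff,
            rpow_three_half_16, rpow_three_half_4]
      rw [hD]
      norm_num [Matrix.mul_apply, Fin.sum_univ_three, Matrix.cons_val_two, Matrix.vecHead, Matrix.vecTail]
  · -- Part (b)
    intro A S d hA hd hS hAeq α hα i j
    have hA' : ∀ i j, 0 ≤ (S * Matrix.diagonal d * S⁻¹) i j := by
      intro i j; rw [← hAeq]; exact hA i j
    by_cases hij : i = j
    · subst hij
      rw [← contPow_half S d hd hS (by linarith : α ≠ 0), Matrix.mul_apply]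
      apply Finset.sum_nonneg
      intro k _
      by_cases hk : k = i
      · subst hk
        exact mul_self_nonneg _
      · exact mul_nonneg
          (offdiag_nonneg S d hA' hd hS (fun h => hk h.symm) (by linarith : 1 < α/2))
          (offdiag_nonneg S d hA' hd hS hk (by linarith : 1 < α/2))
    · exact offdiag_nonneg S d hA' hd hS hij (by linarith : 1 < α)
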